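/- Fix a ∈ (0, π/3). Let h_1 : ℝ → ℝ be square-integrable, vanishing outside (5a/2, 3a), and let e_1 : ℝ → ℂ be square-integrable on (3a/2, 2a), satisfy (M_{h_1} e_1)(x) = −e_1(x) for almost every x ∈ (3a/2, 2a), where K_{h_1}(x) = ∫_x^{3a} h_1(τ) dτ and (M_{h_1} f)(x) = ∫_{3a/2}^{7a/2−x} K_{h_1}(x + t − a/2) f(t) dt, and additionally satisfy ∫_{3a/2}^{2a} e_1(x) dx = 0. For α ∈ ℂ define q_{α,1} : ℝ → ℂ by: q_{α,1}(x) = 0 for x ∈ (0, 3a/2); q_{α,1}(x) = α e_1(x) for x ∈ (3a/2, 2a); q_{α,1}(x) = −α K_{h_1}(x + a/2) ∫_{3a/2}^{x−a/2} e_1(t) dt for x ∈ (2a, 5a/2); q_{α,1}(x) = h_1(x) for x ∈ (5a/2, 3a); and q_{α,1}(x) = 0 for x ∈ (3a, π) and outside (0, π). Then for every α ∈ ℂ: ∫_a^π q_{α,1}(x) dx = ∫_{5a/2}^{3a} h_1(x) dx; in particular this integral is independent of α. -/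

import Mathlib

open MeasureTheory Set
open scoped Real

noncomputable def Kfun (a : ℝ) (h : ℝ → ℂ) (x : ℝ) : ℂ := ∫ τ in x..(3 * a), h τ

noncomputable def Mop (a : ℝ) (h f : ℝ → ℂ) (x : ℝ) : ℂ :=
  ∫ t in (3 * a / 2)..(7 * a / 2 - x), Kfun a h (x + t - a / 2) * f t

noncomputable def qfam (a : ℝ) (h e : ℝ → ℂ) (α : ℂ) (x : ℝ) : ℂ :=
  if x ∈ Set.Ioo (3 * a / 2) (2 * a) then α * e x
  else if x ∈ Set.Ioo (2 * a) (5 * a / 2) then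
    -α * Kfun a h (x + a / 2) * (∫ t in (3 * a / 2)..(x - a / 2), e t)
  else if x ∈ Set.Ioo (5 * a / 2) (3 * a) then h x
  else 0

private lemma congr_Ioo' {f g : ℝ → ℂ} {p r : ℝ} (hpr : p ≤ r)
    (h : ∀ x ∈ Set.Ioo p r, f x = g x) : (∫ x in p..r, f x) = ∫ x in p..r, g x := by
  rw [intervalIntegral.integral_of_le hpr, intervalIntegral.integral_of_le hpr,
    integral_Ioc_eq_integral_Ioo, integral_Ioc_eq_integral_Ioo]
  exact setIntegral_congr_fun measurableSet_Ioo h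

private lemma intInt_of_Ioo' {f : ℝ → ℂ} {p r : ℝ} (hpr : p ≤ r)
    (h : IntegrableOn f (Set.Ioo p r) volume) : IntervalIntegrable f volume p r :=
  (intervalIntegrable_iff_integrableOn_Ioo_of_le hpr).mpr h

theorem statement18
    (a : ℝ) (ha : a ∈ Set.Ioo 0 (π / 3))
    (h : ℝ → ℝ)
    (hh2 : MemLp h 2 volume)
    (hh0 : ∀ x : ℝ, x ∉ Set.Ioo (5 * a / 2) (3 * a) → h x = 0)
    (e : ℝ → ℂ)
    (he2 : MemLp e 2 (volume.restrict (Set.Ioo (3 * a / 2) (2 * a))))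
    (heig : ∀ᵐ x ∂(volume.restrict (Set.Ioo (3 * a / 2) (2 * a))),
      Mop a (fun y => (h y : ℂ)) e x = -e x)
    (hmean : (∫ x in (3 * a / 2)..(2 * a), e x) = 0) :
    ∀ α : ℂ,
      (∫ x in a..π, qfam a (fun y => (h y : ℂ)) e α x)
        = ∫ x in (5 * a / 2)..(3 * a), (h x : ℂ) := by
  intro α
  obtain ⟨ha0, haπ⟩ := ha
  have h3aπ : 3 * a < π := by linarith
  set H : ℝ → ℂ := fun y => (h y : ℂ) with hHdef
  -- Integrability of H on all of ℝ
  have hHOn : IntegrableOn H (Set.Ioo (5 * a / 2) (3 * a)) volume := by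
    haveI : Fact (volume (Set.Ioo (5 * a / 2) (3 * a)) < ⊤) := ⟨measure_Ioo_lt_top⟩
    exact memLp_one_iff_integrable.mp
      ((hh2.ofReal.restrict _).mono_exponent (by norm_num))
  have hHind : (Set.Ioo (5 * a / 2) (3 * a)).indicator H = H := by
    funext x
    by_cases hx : x ∈ Set.Ioo (5 * a / 2) (3 * a)
    · simp [Set.indicator_of_mem hx]
    · simp [Set.indicator_of_notMem hx, hHdef, hh0 x hx]
  have hHint : Integrable H volume := by
    rw [← hHind]; exact hHOn.integrable_indicator measurableSet_Ioo
  -- Integrability of e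
  have heOn : IntegrableOn e (Set.Ioo (3 * a / 2) (2 * a)) volume := by
    haveI : Fact (volume (Set.Ioo (3 * a / 2) (2 * a)) < ⊤) := ⟨measure_Ioo_lt_top⟩
    exact memLp_one_iff_integrable.mp (he2.mono_exponent (by norm_num))
  set eI : ℝ → ℂ := (Set.Ioo (3 * a / 2) (2 * a)).indicator e with heIdef
  have heIint : Integrable eI volume := heOn.integrable_indicator measurableSet_Ioo
  have heIeq : ∀ x ∈ Set.Ioo (3 * a / 2) (2 * a), eI x = e x := fun x hx =>
    Set.indicator_of_mem hx e
  -- K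
  set K : ℝ → ℂ := Kfun a H with hKdef
  have hKcont : Continuous K := by
    have : K = fun x => - ∫ t in (3 * a)..x, H t := by
      funext x
      exact intervalIntegral.integral_symm (3 * a) x
    rw [this]; exact (hHint.continuous_primitive (3 * a)).neg
  have hKbdd : ∀ x, ‖K x‖ ≤ ∫ t, ‖H t‖ := by
    intro x
    calc ‖K x‖ ≤ ∫ t in Set.uIoc x (3 * a), ‖H t‖ :=
          intervalIntegral.norm_integral_le_integral_norm_uIoc
      _ ≤ ∫ t, ‖H t‖ :=
          setIntegral_le_integral hHint.norm (Filter.Eventually.of_forall fun t => norm_nonneg _)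
  -- primitives
  set E : ℝ → ℂ := fun s => ∫ t in (3 * a / 2)..s, eI t with hEdef
  have hEcont : Continuous E := heIint.continuous_primitive (3 * a / 2)
  set G : ℝ → ℂ := fun v => ∫ u in v..(3 * a), K u with hGdef
  set μ : Measure ℝ := volume.restrict (Set.Ioo (3 * a / 2) (2 * a)) with hμdef
  have heIμ : Integrable eI μ := heIint.restrict
  haveI : IsFiniteMeasure μ := by
    constructor
    rw [hμdef, Measure.restrict_apply_univ]
    exact measure_Ioo_lt_top
  have hSnd : Integrable (fun p : ℝ × ℝ => eI p.2) (μ.prod μ) := by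
    have := (integrable_const (μ := μ) (1 : ℂ)).mul_prod heIμ
    simpa using this
  -- Fubini 1
  have fub1 : (∫ s, K (s + a) * E s ∂μ) = ∫ t, eI t * G (t + a) ∂μ := by
    set f : ℝ → ℝ → ℂ := fun s t => if t ≤ s then K (s + a) * eI t else 0 with hfdef
    have hintf : Integrable (Function.uncurry f) (μ.prod μ) := by
      have hbase : Integrable (fun p : ℝ × ℝ => K (p.1 + a) * eI p.2) (μ.prod μ) :=
        hSnd.bdd_mul ((hKcont.comp (continuous_fst.add continuous_const)).aestronglyMeasurable)
          (Filter.Eventually.of_forall fun p => hKbdd _)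
      have : Function.uncurry f =
          ({p : ℝ × ℝ | p.2 ≤ p.1}).indicator (fun p => K (p.1 + a) * eI p.2) := by
        funext p
        simp [Function.uncurry, hfdef, Set.indicator_apply]
      rw [this]
      exact hbase.indicator (isClosed_le continuous_snd continuous_fst).measurableSet
    have swap := integral_integral_swap hintf
    have L : ∀ s ∈ Set.Ioo (3 * a / 2) (2 * a), (∫ t, f s t ∂μ) = K (s + a) * E s := by
      intro s hs
      have hifun : (fun t => f s t) = (Set.Iic s).indicator (fun t => K (s + a) * eI t) := by
        funext t; simp [hfdef, Set.indicator_apply]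
      have hset : Set.Iic s ∩ Set.Ioo (3 * a / 2) (2 * a) = Set.Ioc (3 * a / 2) s := by
        ext t
        simp only [Set.mem_inter_iff, Set.mem_Iic, Set.mem_Ioo, Set.mem_Ioc]
        constructor
        · rintro ⟨h1, h2, h3⟩; exact ⟨h2, h1⟩
        · rintro ⟨h1, h2⟩; exact ⟨h2, h1, lt_of_le_of_lt h2 hs.2⟩
      rw [hifun, hμdef, integral_indicator measurableSet_Iic,
        Measure.restrict_restrict measurableSet_Iic, hset, MeasureTheory.integral_const_mul]
      congr 1
      rw [hEdef]
      exact (intervalIntegral.integral_of_le hs.1.le).symm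
    have R : ∀ t ∈ Set.Ioo (3 * a / 2) (2 * a), (∫ s, f s t ∂μ) = eI t * G (t + a) := by
      intro t ht
      have hifun : (fun s => f s t) = (Set.Ici t).indicator (fun s => K (s + a) * eI t) := by
        funext s; simp [hfdef, Set.indicator_apply]
      have hset : Set.Ici t ∩ Set.Ioo (3 * a / 2) (2 * a) = Set.Ico t (2 * a) := by
        ext s
        simp only [Set.mem_inter_iff, Set.mem_Ici, Set.mem_Ioo, Set.mem_Ico]
        constructor
        · rintro ⟨h1, h2, h3⟩; exact ⟨h1, h3⟩
        · rintro ⟨h1, h2⟩; exact ⟨h1, lt_of_lt_of_le ht.1 h1, h2⟩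
      rw [hifun, hμdef, integral_indicator measurableSet_Ici,
        Measure.restrict_restrict measurableSet_Ici, hset, MeasureTheory.integral_mul_const]
      rw [mul_comm]
      congr 1
      rw [integral_Ico_eq_integral_Ioo, ← integral_Ioc_eq_integral_Ioo,
        ← intervalIntegral.integral_of_le ht.2.le]
      rw [intervalIntegral.integral_comp_add_right K a]
      rw [hGdef]
      simp only []
      congr 1
      ring
    calc (∫ s, K (s + a) * E s ∂μ) = ∫ s, ∫ t, f s t ∂μ ∂μ := by
          rw [hμdef]
          exact (setIntegral_congr_fun measurableSet_Ioo fun s hs => (L s hs)).symm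
      _ = ∫ t, ∫ s, f s t ∂μ ∂μ := swap
      _ = ∫ t, eI t * G (t + a) ∂μ := by
          rw [hμdef]
          exact setIntegral_congr_fun measurableSet_Ioo fun t ht => (R t ht)
  -- Fubini 2
  have fub2 : (∫ t, eI t * G (t + a) ∂μ) = 0 := by
    set g : ℝ → ℝ → ℂ := fun x t =>
      if t ≤ 7 * a / 2 - x then K (x + t - a / 2) * eI t else 0 with hgdef
    have hintg : Integrable (Function.uncurry g) (μ.prod μ) := by
      have hbase : Integrable (fun p : ℝ × ℝ => K (p.1 + p.2 - a / 2) * eI p.2) (μ.prod μ) :=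
        hSnd.bdd_mul
          ((hKcont.comp ((continuous_fst.add continuous_snd).sub
            continuous_const)).aestronglyMeasurable)
          (Filter.Eventually.of_forall fun p => hKbdd _)
      have : Function.uncurry g =
          ({p : ℝ × ℝ | p.2 ≤ 7 * a / 2 - p.1}).indicator
            (fun p => K (p.1 + p.2 - a / 2) * eI p.2) := by
        funext p
        simp [Function.uncurry, hgdef, Set.indicator_apply]
      rw [this]
      exact hbase.indicator
        (isClosed_le continuous_snd (continuous_const.sub continuous_fst)).measurableSet
    have swap := integral_integral_swap hintg
    have L : ∀ x ∈ Set.Ioo (3 * a / 2) (2 * a), (∫ t, g x t ∂μ) = Mop a H e x := by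
      intro x hx
      have hx1 : 3 * a / 2 < 7 * a / 2 - x := by
        have := hx.2; linarith
      have hx2 : 7 * a / 2 - x < 2 * a := by
        have := hx.1; linarith
      have hifun : (fun t => g x t) =
          (Set.Iic (7 * a / 2 - x)).indicator (fun t => K (x + t - a / 2) * eI t) := by
        funext t; simp [hgdef, Set.indicator_apply]
      have hset : Set.Iic (7 * a / 2 - x) ∩ Set.Ioo (3 * a / 2) (2 * a)
          = Set.Ioc (3 * a / 2) (7 * a / 2 - x) := by
        ext t
        simp only [Set.mem_inter_iff, Set.mem_Iic, Set.mem_Ioo, Set.mem_Ioc]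
        constructor
        · rintro ⟨h1, h2, h3⟩; exact ⟨h2, h1⟩
        · rintro ⟨h1, h2⟩; exact ⟨h2, h1, lt_of_le_of_lt h2 hx2⟩
      rw [hifun, hμdef, integral_indicator measurableSet_Iic,
        Measure.restrict_restrict measurableSet_Iic, hset,
        ← intervalIntegral.integral_of_le hx1.le]
      have : (∫ t in (3 * a / 2)..(7 * a / 2 - x), K (x + t - a / 2) * eI t)
          = ∫ t in (3 * a / 2)..(7 * a / 2 - x), K (x + t - a / 2) * e t := by
        apply congr_Ioo' hx1.le
        intro t ht
        rw [heIeq t ⟨ht.1, lt_trans ht.2 hx2⟩]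
      rw [this]
      rfl
    have R : ∀ t ∈ Set.Ioo (3 * a / 2) (2 * a), (∫ x, g x t ∂μ) = eI t * G (t + a) := by
      intro t ht
      have ht1 : 3 * a / 2 < 7 * a / 2 - t := by
        have := ht.2; linarith
      have ht2 : 7 * a / 2 - t < 2 * a := by
        have := ht.1; linarith
      have hifun : (fun x => g x t) =
          (Set.Iic (7 * a / 2 - t)).indicator (fun x => K (x + t - a / 2) * eI t) := by
        funext x
        simp only [hgdef, Set.indicator_apply, Set.mem_Iic]
        by_cases hc : x ≤ 7 * a / 2 - t
        · rw [if_pos (by linarith), if_pos hc]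
        · rw [if_neg (fun hcon => hc (by linarith)), if_neg hc]
      have hset : Set.Iic (7 * a / 2 - t) ∩ Set.Ioo (3 * a / 2) (2 * a)
          = Set.Ioc (3 * a / 2) (7 * a / 2 - t) := by
        ext x
        simp only [Set.mem_inter_iff, Set.mem_Iic, Set.mem_Ioo, Set.mem_Ioc]
        constructor
        · rintro ⟨h1, h2, h3⟩; exact ⟨h2, h1⟩
        · rintro ⟨h1, h2⟩; exact ⟨h2, h1, lt_of_le_of_lt h2 ht2⟩
      rw [hifun, hμdef, integral_indicator measurableSet_Iic,
        Measure.restrict_restrict measurableSet_Iic, hset, MeasureTheory.integral_mul_const]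
      rw [mul_comm]
      congr 1
      rw [← intervalIntegral.integral_of_le ht1.le]
      have harg : (fun x => K (x + t - a / 2)) = fun x => K (x + (t - a / 2)) := by
        funext x; congr 1; ring
      calc (∫ x in (3 * a / 2)..(7 * a / 2 - t), K (x + t - a / 2))
          = ∫ x in (3 * a / 2)..(7 * a / 2 - t), K (x + (t - a / 2)) := by rw [harg]
        _ = ∫ u in (3 * a / 2 + (t - a / 2))..(7 * a / 2 - t + (t - a / 2)), K u :=
            intervalIntegral.integral_comp_add_right K (t - a / 2)
        _ = G (t + a) := by
            rw [hGdef]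
            simp only []
            congr 1 <;> ring
    have hMop : (∫ x, Mop a H e x ∂μ) = 0 := by
      have : (∫ x, Mop a H e x ∂μ) = ∫ x, -e x ∂μ := integral_congr_ae heig
      rw [this, integral_neg]
      have : (∫ x, e x ∂μ) = ∫ x in (3 * a / 2)..(2 * a), e x := by
        rw [hμdef, ← integral_Ioc_eq_integral_Ioo,
          ← intervalIntegral.integral_of_le (by linarith : 3 * a / 2 ≤ 2 * a)]
      rw [this, hmean, neg_zero]
    calc (∫ t, eI t * G (t + a) ∂μ)
        = ∫ t, ∫ x, g x t ∂μ ∂μ := by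
          rw [hμdef]
          exact (setIntegral_congr_fun measurableSet_Ioo fun t ht => (R t ht)).symm
      _ = ∫ x, ∫ t, g x t ∂μ ∂μ := swap.symm
      _ = ∫ x, Mop a H e x ∂μ := by
          rw [hμdef]
          exact setIntegral_congr_fun measurableSet_Ioo fun x hx => (L x hx)
      _ = 0 := hMop
  have key : (∫ s in (3 * a / 2)..(2 * a), K (s + a) * E s) = 0 := by
    rw [intervalIntegral.integral_of_le (by linarith : 3 * a / 2 ≤ 2 * a),
      integral_Ioc_eq_integral_Ioo]
    rw [show (∫ s in Set.Ioo (3 * a / 2) (2 * a), K (s + a) * E s) = ∫ s, K (s + a) * E s ∂μ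
      from rfl]
    rw [fub1, fub2]
  -- Decomposition of the main integral
  set q : ℝ → ℂ := qfam a H e α with hqdef
  have hq1 : ∀ x ∈ Set.Ioo a (3 * a / 2), q x = 0 := by
    intro x hx
    obtain ⟨hx1, hx2⟩ := hx
    rw [hqdef]
    unfold qfam
    rw [if_neg (by simp only [Set.mem_Ioo]; rintro ⟨h1, h2⟩; linarith),
      if_neg (by simp only [Set.mem_Ioo]; rintro ⟨h1, h2⟩; linarith),
      if_neg (by simp only [Set.mem_Ioo]; rintro ⟨h1, h2⟩; linarith)]
  have hq2 : ∀ x ∈ Set.Ioo (3 * a / 2) (2 * a), q x = α * e x := by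
    intro x hx
    rw [hqdef]; unfold qfam
    rw [if_pos hx]
  have hq3 : ∀ x ∈ Set.Ioo (2 * a) (5 * a / 2), q x = -α * (K (x + a / 2) * E (x - a / 2)) := by
    intro x hx
    obtain ⟨hx1, hx2⟩ := hx
    rw [hqdef]; unfold qfam
    rw [if_neg (by simp only [Set.mem_Ioo]; rintro ⟨h1, h2⟩; linarith),
      if_pos (by simp only [Set.mem_Ioo]; exact ⟨hx1, hx2⟩)]
    have : (∫ t in (3 * a / 2)..(x - a / 2), e t) = E (x - a / 2) := by
      rw [hEdef]
      refine (congr_Ioo' (by linarith) ?_)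
      intro t ht
      exact (heIeq t ⟨ht.1, by have := ht.2; linarith⟩).symm
    rw [this, ← hKdef, mul_assoc]
  have hq4 : ∀ x ∈ Set.Ioo (5 * a / 2) (3 * a), q x = H x := by
    intro x hx
    obtain ⟨hx1, hx2⟩ := hx
    rw [hqdef]; unfold qfam
    rw [if_neg (by simp only [Set.mem_Ioo]; rintro ⟨h1, h2⟩; linarith),
      if_neg (by simp only [Set.mem_Ioo]; rintro ⟨h1, h2⟩; linarith),
      if_pos (by simp only [Set.mem_Ioo]; exact ⟨hx1, hx2⟩)]
  have hq5 : ∀ x ∈ Set.Ioo (3 * a) π, q x = 0 := by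
    intro x hx
    obtain ⟨hx1, hx2⟩ := hx
    rw [hqdef]; unfold qfam
    rw [if_neg (by simp only [Set.mem_Ioo]; rintro ⟨h1, h2⟩; linarith),
      if_neg (by simp only [Set.mem_Ioo]; rintro ⟨h1, h2⟩; linarith),
      if_neg (by simp only [Set.mem_Ioo]; rintro ⟨h1, h2⟩; linarith)]
  -- interval integrability of q on the pieces
  have i1 : IntervalIntegrable q volume a (3 * a / 2) := by
    apply intInt_of_Ioo' (by linarith)
    exact (integrableOn_congr_fun (fun x hx => (hq1 x hx).symm) measurableSet_Ioo).mp
      (integrableOn_zero)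
  have i2 : IntervalIntegrable q volume (3 * a / 2) (2 * a) := by
    apply intInt_of_Ioo' (by linarith)
    exact (integrableOn_congr_fun (fun x hx => (hq2 x hx).symm) measurableSet_Ioo).mp
      (heOn.const_mul α)
  have i3 : IntervalIntegrable q volume (2 * a) (5 * a / 2) := by
    apply intInt_of_Ioo' (by linarith)
    refine (integrableOn_congr_fun (fun x hx => (hq3 x hx).symm) measurableSet_Ioo).mp ?_
    have hcont : Continuous fun x => -α * (K (x + a / 2) * E (x - a / 2)) :=
      continuous_const.mul ((hKcont.comp (continuous_id.add continuous_const)).mul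
        (hEcont.comp (continuous_id.sub continuous_const)))
    exact hcont.integrableOn_Icc.mono_set Set.Ioo_subset_Icc_self
  have i4 : IntervalIntegrable q volume (5 * a / 2) (3 * a) := by
    apply intInt_of_Ioo' (by linarith)
    exact (integrableOn_congr_fun (fun x hx => (hq4 x hx).symm) measurableSet_Ioo).mp
      hHint.integrableOn
  have i5 : IntervalIntegrable q volume (3 * a) π := by
    apply intInt_of_Ioo' (by linarith)
    exact (integrableOn_congr_fun (fun x hx => (hq5 x hx).symm) measurableSet_Ioo).mp
      (integrableOn_zero)
  have split : (∫ x in a..π, q x)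
      = (∫ x in a..(3 * a / 2), q x) + (∫ x in (3 * a / 2)..(2 * a), q x)
        + (∫ x in (2 * a)..(5 * a / 2), q x) + (∫ x in (5 * a / 2)..(3 * a), q x)
        + (∫ x in (3 * a)..π, q x) := by
    rw [intervalIntegral.integral_add_adjacent_intervals i1 i2,
      intervalIntegral.integral_add_adjacent_intervals (i1.trans i2) i3,
      intervalIntegral.integral_add_adjacent_intervals ((i1.trans i2).trans i3) i4,
      intervalIntegral.integral_add_adjacent_intervals (((i1.trans i2).trans i3).trans i4) i5]
  have p1 : (∫ x in a..(3 * a / 2), q x) = 0 := by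
    rw [congr_Ioo' (by linarith) hq1, intervalIntegral.integral_zero]
  have p2 : (∫ x in (3 * a / 2)..(2 * a), q x) = 0 := by
    rw [congr_Ioo' (by linarith) hq2, intervalIntegral.integral_const_mul, hmean, mul_zero]
  have p3 : (∫ x in (2 * a)..(5 * a / 2), q x) = 0 := by
    rw [congr_Ioo' (by linarith) hq3, intervalIntegral.integral_const_mul]
    have harg : (fun x => K (x + a / 2) * E (x - a / 2))
        = fun x => (fun s => K (s + a) * E s) (x - a / 2) := by
      funext x
      simp only []
      congr 2
      ring
    rw [show (∫ x in (2 * a)..(5 * a / 2), K (x + a / 2) * E (x - a / 2))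
        = ∫ x in (2 * a)..(5 * a / 2), (fun s => K (s + a) * E s) (x - a / 2) from by rw [harg]]
    rw [intervalIntegral.integral_comp_sub_right (fun s => K (s + a) * E s) (a / 2)]
    rw [show (2 * a - a / 2) = 3 * a / 2 by ring, show (5 * a / 2 - a / 2) = 2 * a by ring]
    rw [key, mul_zero]
  have p4 : (∫ x in (5 * a / 2)..(3 * a), q x) = ∫ x in (5 * a / 2)..(3 * a), H x :=
    congr_Ioo' (by linarith) hq4
  have p5 : (∫ x in (3 * a)..π, q x) = 0 := by
    rw [congr_Ioo' (by linarith) hq5, intervalIntegral.integral_zero]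
  rw [show (∫ x in a..π, qfam a (fun y => (h y : ℂ)) e α x) = ∫ x in a..π, q x from rfl]
  rw [split, p1, p2, p3, p4, p5]
  simp [hHdef]
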